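/- Let G be a D-regular Bonnet-Myers sharp graph of diameter L, x_0 ~ x_1 ~ ... ~ x_L a full-length geodesic from a pole x_0, and T_j : B_1(x_{j−1}) → B_1(x_j) good optimal transport maps lying on a transport geodesic from x_0 (composed with T_1, ..., T_{j−1}). Then for every v ∈ B_1(x_{j−1}) in the image of T_{j−1}∘...∘T_1 on B_1(x_0), the vertex v lies on a geodesic from x_0 to T_j(v), i.e. d(x_0, v) + d(v, T_j(v)) = d(x_0, T_j(v)). Consequently, if d(x_0,v) = m and d(x_0,T_j(v)) = n, then j−2 ≤ m ≤ n ≤ j+1, d(v, T_j(v)) = n − m, n = m iff v = T_j(v), and n = m+1 iff v ~ T_j(v). -/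

import Mathlib

open Finset

namespace BMS

open scoped Classical

variable {V : Type*}

/-- The uniform probability measure on the closed 1-ball of `x` in a `D`-regular graph. -/
noncomputable def mu (G : SimpleGraph V) (D : ℕ) (x : V) : V → ℝ :=
  fun v => if G.dist x v ≤ 1 then 1 / (D + 1) else 0

/-- The L¹-Wasserstein distance between `μ_x` and `μ_y`, as an infimum over transport plans. -/
noncomputable def W1 (G : SimpleGraph V) [Fintype V] (D : ℕ) (x y : V) : ℝ :=
  sInf { c : ℝ | ∃ π : V → V → ℝ,
    (∀ u v, 0 ≤ π u v) ∧
    (∀ u, ∑ v, π u v = mu G D x u) ∧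
    (∀ v, ∑ u, π u v = mu G D y v) ∧
    c = ∑ u, ∑ v, (G.dist u v : ℝ) * π u v }

/-- Ollivier Ricci curvature (Lin–Lu–Yau normalization for regular graphs). -/
noncomputable def kappa (G : SimpleGraph V) [Fintype V] (D : ℕ) (x y : V) : ℝ :=
  ((D + 1) / D) * (1 - W1 G D x y)

/-- `G` is Bonnet–Myers sharp: the infimum of the curvature over edges equals `2 / L`. -/
def BMSharp (G : SimpleGraph V) [Fintype V] (D L : ℕ) : Prop :=
  sInf { k : ℝ | ∃ x y, G.Adj x y ∧ k = kappa G D x y } = 2 / (L : ℝ)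

/-- Number of neighbors of `y` at distance `k` from `x0`. -/
noncomputable def sphDeg (G : SimpleGraph V) [Fintype V] (x0 y : V) (k : ℕ) : ℕ :=
  (Finset.univ.filter (fun v => G.Adj y v ∧ G.dist x0 v = k)).card

/-- Number of triangles containing the edge `x ~ y` (common neighbors of `x` and `y`). -/
noncomputable def tri (G : SimpleGraph V) [Fintype V] (x y : V) : ℕ :=
  (Finset.univ.filter (fun v => G.Adj x v ∧ G.Adj y v)).card

/-- A good optimal transport map from `B_1(a)` to `B_1(b)`: a bijection between the 1-balls,
fixing exactly the vertices of `B_1(a) ∩ B_1(b)` (among the domain), whose cost realizes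
the Wasserstein distance `W1 (μ_a, μ_b)`. -/
def goodMap (G : SimpleGraph V) [Fintype V] (D : ℕ) (a b : V) (T : V → V) : Prop :=
  Set.BijOn T {v | G.dist a v ≤ 1} {v | G.dist b v ≤ 1} ∧
  (∀ v, G.dist a v ≤ 1 → (T v = v ↔ G.dist b v ≤ 1)) ∧
  (1 / (D + 1 : ℝ)) *
      ∑ v ∈ Finset.univ.filter (fun v => G.dist a v ≤ 1), (G.dist v (T v) : ℝ) =
    W1 G D a b


/-- Composition `T^j = T_{j-1} ∘ ⋯ ∘ T_0` of the transport maps (`iterT T 0 = id`). -/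
def iterT (T : ℕ → V → V) : ℕ → V → V
  | 0 => id
  | n + 1 => T n ∘ iterT T n

lemma kappa_ge [Fintype V] (G : SimpleGraph V) (D L : ℕ)
    (hBM : BMSharp G D L) {a b : V} (hab : G.Adj a b) :
    2 / (L : ℝ) ≤ kappa G D a b := by
  have hmem : kappa G D a b ∈ { k : ℝ | ∃ x y, G.Adj x y ∧ k = kappa G D x y } :=
    ⟨a, b, hab, rfl⟩
  have hfin : { k : ℝ | ∃ x y, G.Adj x y ∧ k = kappa G D x y }.Finite := by
    apply Set.Finite.subset (Set.finite_range fun p : V × V => kappa G D p.1 p.2)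
    rintro k ⟨u, w, _, rfl⟩
    exact ⟨(u, w), rfl⟩
  exact hBM ▸ csInf_le hfin.bddBelow hmem

lemma step_cost [Fintype V] (G : SimpleGraph V) (D L : ℕ) (hD : 0 < D) (hL : 0 < L)
    (hBM : BMSharp G D L) {a b : V} (hab : G.Adj a b) :
    ((D : ℝ) + 1) * W1 G D a b ≤ ((D : ℝ) + 1) - 2 * D / L := by
  have hD' : (0 : ℝ) < D := by exact_mod_cast hD
  have hL' : (0 : ℝ) < L := by exact_mod_cast hL
  have h := kappa_ge G D L hBM hab
  unfold kappa at h
  rw [div_mul_eq_mul_div, div_le_div_iff₀ hL' hD'] at h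
  have h2 : 2 * (D : ℝ) / L ≤ ((D : ℝ) + 1) * (1 - W1 G D a b) := by
    rw [div_le_iff₀ hL']; nlinarith
  nlinarith
lemma ball_iff (G : SimpleGraph V) (hconn : G.Connected) (y v : V) :
    G.dist y v ≤ 1 ↔ v = y ∨ G.Adj y v := by
  constructor
  · intro h
    interval_cases hd : G.dist y v
    · exact Or.inl ((hconn.dist_eq_zero_iff).mp hd).symm
    · exact Or.inr (SimpleGraph.dist_eq_one_iff_adj.mp hd)
  · rintro (rfl | h)
    · simp [SimpleGraph.dist_self]
    · exact le_of_eq (SimpleGraph.dist_eq_one_iff_adj.mpr h)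

lemma ball_eq [Fintype V] (G : SimpleGraph V) (hconn : G.Connected) (y : V) :
    Finset.univ.filter (fun v => G.dist y v ≤ 1) = insert y (G.neighborFinset y) := by
  ext v
  simp [ball_iff G hconn y v, SimpleGraph.mem_neighborFinset, eq_comm]

lemma ball_card [Fintype V] (G : SimpleGraph V) (hconn : G.Connected) {D : ℕ}
    (hreg : G.IsRegularOfDegree D) (y : V) :
    (Finset.univ.filter (fun v => G.dist y v ≤ 1)).card = D + 1 := by
  rw [ball_eq G hconn y, Finset.card_insert_of_notMem (by simp),
    G.card_neighborFinset_eq_degree, hreg y]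

lemma dist_x_le (G : SimpleGraph V) (hconn : G.Connected) (L : ℕ) (x : ℕ → V)
    (hadj : ∀ j < L, G.Adj (x j) (x (j + 1))) :
    ∀ a b, a ≤ b → b ≤ L → G.dist (x a) (x b) ≤ b - a := by
  intro a b hab hbL
  induction b with
  | zero => simp [Nat.le_zero.mp hab, SimpleGraph.dist_self]
  | succ b ih =>
    rcases Nat.lt_or_ge a (b+1) with h | h
    · have h1 : G.dist (x a) (x b) ≤ b - a := ih (by omega) (by omega)
      have h2 : G.dist (x b) (x (b+1)) ≤ 1 :=
        le_of_eq (SimpleGraph.dist_eq_one_iff_adj.mpr (hadj b (by omega)))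
      calc G.dist (x a) (x (b+1)) ≤ G.dist (x a) (x b) + G.dist (x b) (x (b+1)) :=
            hconn.dist_triangle
        _ ≤ b + 1 - a := by omega
    · have : a = b + 1 := le_antisymm hab h
      simp [this, SimpleGraph.dist_self]

lemma dist_x (G : SimpleGraph V) (hconn : G.Connected) (L : ℕ) (x : ℕ → V)
    (hadj : ∀ j < L, G.Adj (x j) (x (j + 1)))
    (hgeo : G.dist (x 0) (x L) = L) :
    ∀ k ≤ L, G.dist (x 0) (x k) = k := by
  intro k hk
  have h1 : G.dist (x 0) (x k) ≤ k := by
    simpa using dist_x_le G hconn L x hadj 0 k (by omega) hk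
  have h2 : G.dist (x k) (x L) ≤ L - k := dist_x_le G hconn L x hadj k L hk le_rfl
  have h3 : G.dist (x 0) (x L) ≤ G.dist (x 0) (x k) + G.dist (x k) (x L) :=
    hconn.dist_triangle
  omega

lemma iterT_bij [Fintype V] (G : SimpleGraph V) (D L : ℕ) (x : ℕ → V)
    (T : ℕ → V → V) (hT : ∀ j < L, goodMap G D (x j) (x (j + 1)) (T j)) :
    ∀ k ≤ L, Set.BijOn (iterT T k) {v | G.dist (x 0) v ≤ 1} {v | G.dist (x k) v ≤ 1} := by
  intro k
  induction k with
  | zero => intro _; exact Set.bijOn_id _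
  | succ k ih =>
    intro hk
    exact ((hT k (by omega)).1).comp (ih (by omega))

lemma main_key [Fintype V] (G : SimpleGraph V) (hconn : G.Connected)
    (D L : ℕ) (hD : 0 < D) (hL : 0 < L) (hreg : G.IsRegularOfDegree D)
    (hBM : BMSharp G D L) (x : ℕ → V)
    (hadj : ∀ j < L, G.Adj (x j) (x (j + 1)))
    (hgeo : G.dist (x 0) (x L) = L)
    (T : ℕ → V → V) (hT : ∀ j < L, goodMap G D (x j) (x (j + 1)) (T j)) :
    ∀ k < L, ∀ z, G.dist (x 0) z ≤ 1 →
      G.dist (x 0) (iterT T k z) + G.dist (iterT T k z) (iterT T (k+1) z)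
        = G.dist (x 0) (iterT T (k+1) z) := by
  have hbij := iterT_bij G D L x T hT
  set B : ℕ → Finset V := fun k => Finset.univ.filter (fun v => G.dist (x k) v ≤ 1) with hB
  -- reindexing sums over the ball at x k by the ball at x 0
  have hreindex : ∀ k ≤ L, ∀ g : V → ℝ,
      ∑ z ∈ B 0, g (iterT T k z) = ∑ v ∈ B k, g v := by
    intro k hk g
    apply Finset.sum_bij (fun z _ => iterT T k z)
    · intro a ha
      simp only [hB, mem_filter, mem_univ, true_and] at ha ⊢
      exact (hbij k hk).1 ha
    · intro a₁ ha₁ a₂ ha₂ h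
      simp only [hB, mem_filter, mem_univ, true_and] at ha₁ ha₂
      exact (hbij k hk).2.1 ha₁ ha₂ h
    · intro b hb
      simp only [hB, mem_filter, mem_univ, true_and] at hb
      obtain ⟨a, ha, rfl⟩ := (hbij k hk).2.2 hb
      exact ⟨a, by simpa [hB] using ha, rfl⟩
    · intro a _; rfl
  -- per-step cost bound
  have hcost : ∀ k < L, ∑ v ∈ B k, (G.dist v (T k v) : ℝ) ≤ ((D : ℝ) + 1) - 2 * D / L := by
    intro k hk
    have hg := (hT k hk).2.2
    have hD1 : ((D : ℝ) + 1) ≠ 0 := by positivity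
    calc ∑ v ∈ B k, (G.dist v (T k v) : ℝ)
        = ((D : ℝ) + 1) * ((1 / ((D : ℝ) + 1)) * ∑ v ∈ B k, (G.dist v (T k v) : ℝ)) := by
          field_simp
      _ = ((D : ℝ) + 1) * W1 G D (x k) (x (k+1)) := by rw [← hg]
      _ ≤ _ := step_cost G D L hD hL hBM (hadj k hk)
  -- the total error is zero
  have hL' : (0 : ℝ) < L := by exact_mod_cast hL
  have herr : ∑ z ∈ B 0, ∑ k ∈ Finset.range L,
      ((G.dist (iterT T k z) (iterT T (k+1) z) : ℝ)
        - ((G.dist (x 0) (iterT T (k+1) z) : ℝ) - (G.dist (x 0) (iterT T k z) : ℝ))) = 0 := by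
    have hnonneg : ∀ z ∈ B 0, ∀ k ∈ Finset.range L,
        (0:ℝ) ≤ (G.dist (iterT T k z) (iterT T (k+1) z) : ℝ)
          - ((G.dist (x 0) (iterT T (k+1) z) : ℝ) - (G.dist (x 0) (iterT T k z) : ℝ)) := by
      intro z _ k _
      have := hconn.dist_triangle (u := x 0) (v := iterT T k z) (w := iterT T (k+1) z)
      have := (Nat.cast_le (α := ℝ)).mpr this
      push_cast at this
      linarith
    apply le_antisymm
    · -- upper bound
      have hiter : ∀ k, ∀ z : V, iterT T (k+1) z = T k (iterT T k z) := fun _ _ => rfl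
      have hiter0 : ∀ z : V, iterT T 0 z = z := fun _ => rfl
      have hsub : ∀ z : V, ∑ k ∈ Finset.range L,
          ((G.dist (iterT T k z) (iterT T (k+1) z) : ℝ)
            - ((G.dist (x 0) (iterT T (k+1) z) : ℝ) - (G.dist (x 0) (iterT T k z) : ℝ)))
          = (∑ k ∈ Finset.range L, (G.dist (iterT T k z) (iterT T (k+1) z) : ℝ))
            - ((G.dist (x 0) (iterT T L z) : ℝ) - (G.dist (x 0) z : ℝ)) := by
        intro z
        rw [Finset.sum_sub_distrib,
          Finset.sum_range_sub (f := fun k => ((G.dist (x 0) (iterT T k z) : ℝ))), hiter0]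
      have hA : ∑ z ∈ B 0, ∑ k ∈ Finset.range L,
          (G.dist (iterT T k z) (iterT T (k+1) z) : ℝ)
          ≤ (L : ℝ) * (((D : ℝ) + 1) - 2 * D / L) := by
        rw [Finset.sum_comm]
        calc ∑ k ∈ Finset.range L, ∑ z ∈ B 0, (G.dist (iterT T k z) (iterT T (k+1) z) : ℝ)
            ≤ ∑ _k ∈ Finset.range L, (((D : ℝ) + 1) - 2 * D / L) := by
              apply Finset.sum_le_sum
              intro k hk
              rw [Finset.mem_range] at hk
              have hr := hreindex k hk.le (fun v => (G.dist v (T k v) : ℝ))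
              simp only [hiter k]
              rw [hr]
              exact hcost k hk
          _ = (L : ℝ) * (((D : ℝ) + 1) - 2 * D / L) := by
              simp [Finset.sum_const, Finset.card_range, nsmul_eq_mul]; ring
      have hS1 : ((D : ℝ) + 1) * ((L : ℝ) - 1) + 1
          ≤ ∑ z ∈ B 0, (G.dist (x 0) (iterT T L z) : ℝ) := by
        rw [hreindex L le_rfl (fun w => (G.dist (x 0) w : ℝ))]
        have hBL : B L = insert (x L) (G.neighborFinset (x L)) := ball_eq G hconn (x L)
        rw [hBL, Finset.sum_insert (by simp)]
        have h1 : ∀ w ∈ G.neighborFinset (x L), (L : ℝ) - 1 ≤ (G.dist (x 0) w : ℝ) := by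
          intro w hw
          rw [SimpleGraph.mem_neighborFinset] at hw
          have h2 : G.dist (x 0) (x L) ≤ G.dist (x 0) w + G.dist w (x L) := hconn.dist_triangle
          have h3 : G.dist w (x L) = 1 := SimpleGraph.dist_eq_one_iff_adj.mpr hw.symm
          have h4 : L ≤ G.dist (x 0) w + 1 := by rw [hgeo] at h2; omega
          have h5 : (L : ℝ) ≤ (G.dist (x 0) w : ℝ) + 1 := by exact_mod_cast h4
          linarith
        have hsum := Finset.card_nsmul_le_sum (G.neighborFinset (x L))
          (fun w => (G.dist (x 0) w : ℝ)) ((L : ℝ) - 1) h1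
        rw [G.card_neighborFinset_eq_degree, hreg (x L), nsmul_eq_mul] at hsum
        have hgeoR : (G.dist (x 0) (x L) : ℝ) = L := by exact_mod_cast hgeo
        rw [hgeoR]
        nlinarith [hsum]
      have hS0 : ∑ z ∈ B 0, (G.dist (x 0) z : ℝ) ≤ (D : ℝ) := by
        have hB0 : B 0 = insert (x 0) (G.neighborFinset (x 0)) := ball_eq G hconn (x 0)
        rw [hB0, Finset.sum_insert (by simp)]
        have h1 : ∀ w ∈ G.neighborFinset (x 0), (G.dist (x 0) w : ℝ) ≤ 1 := by
          intro w hw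
          rw [SimpleGraph.mem_neighborFinset] at hw
          have : G.dist (x 0) w ≤ 1 := le_of_eq (SimpleGraph.dist_eq_one_iff_adj.mpr hw)
          exact_mod_cast this
        have hsum := Finset.sum_le_card_nsmul (G.neighborFinset (x 0))
          (fun w => (G.dist (x 0) w : ℝ)) 1 h1
        rw [G.card_neighborFinset_eq_degree, hreg (x 0), nsmul_eq_mul] at hsum
        simp [SimpleGraph.dist_self]
        linarith
      have hcancel : (L : ℝ) * (2 * D / L) = 2 * D := by field_simp
      calc ∑ z ∈ B 0, ∑ k ∈ Finset.range L,
            ((G.dist (iterT T k z) (iterT T (k+1) z) : ℝ)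
              - ((G.dist (x 0) (iterT T (k+1) z) : ℝ) - (G.dist (x 0) (iterT T k z) : ℝ)))
          = ∑ z ∈ B 0, ((∑ k ∈ Finset.range L, (G.dist (iterT T k z) (iterT T (k+1) z) : ℝ))
              - ((G.dist (x 0) (iterT T L z) : ℝ) - (G.dist (x 0) z : ℝ))) :=
            Finset.sum_congr rfl fun z _ => hsub z
        _ = (∑ z ∈ B 0, ∑ k ∈ Finset.range L, (G.dist (iterT T k z) (iterT T (k+1) z) : ℝ))
              - ((∑ z ∈ B 0, (G.dist (x 0) (iterT T L z) : ℝ))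
                - ∑ z ∈ B 0, (G.dist (x 0) z : ℝ)) := by
            rw [Finset.sum_sub_distrib, Finset.sum_sub_distrib]
        _ ≤ 0 := by nlinarith [hA, hS1, hS0, hcancel]
    · exact Finset.sum_nonneg fun z hz => Finset.sum_nonneg (hnonneg z hz)
  -- conclude
  intro k hk z hz
  have hzB : z ∈ B 0 := by simp [hB, hz]
  have h0 := (Finset.sum_eq_zero_iff_of_nonneg
      (fun z hz => Finset.sum_nonneg (fun k hk => by
        have := hconn.dist_triangle (u := x 0) (v := iterT T k z) (w := iterT T (k+1) z)
        have := (Nat.cast_le (α := ℝ)).mpr this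
        push_cast at this
        linarith))).mp herr z hzB
  have h1 := (Finset.sum_eq_zero_iff_of_nonneg (fun k hk => by
        have := hconn.dist_triangle (u := x 0) (v := iterT T k z) (w := iterT T (k+1) z)
        have := (Nat.cast_le (α := ℝ)).mpr this
        push_cast at this
        linarith)).mp h0 k (Finset.mem_range.mpr hk)
  have : ((G.dist (x 0) (iterT T k z) : ℝ)) + (G.dist (iterT T k z) (iterT T (k+1) z) : ℝ)
      = (G.dist (x 0) (iterT T (k+1) z) : ℝ) := by linarith
  exact_mod_cast this

theorem stmt [Fintype V] (G : SimpleGraph V) (hconn : G.Connected)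
    (D L : ℕ) (hD : 0 < D) (hL : 0 < L) (hreg : G.IsRegularOfDegree D)
    (hdiam : G.diam = L) (hBM : BMSharp G D L)
    (x : ℕ → V) (hpole : ∃ p, G.dist (x 0) p = L)
    (hadj : ∀ j < L, G.Adj (x j) (x (j + 1)))
    (hgeo : G.dist (x 0) (x L) = L)
    (T : ℕ → V → V) (hT : ∀ j < L, goodMap G D (x j) (x (j + 1)) (T j))
    (j : ℕ) (hj1 : 1 ≤ j) (hjL : j ≤ L)
    (z v : V) (hz : G.dist (x 0) z ≤ 1) (hv : v = iterT T (j - 1) z)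
    (m n : ℕ) (hm : G.dist (x 0) v = m) (hn : G.dist (x 0) (T (j - 1) v) = n) :
    G.dist (x 0) v + G.dist v (T (j - 1) v) = G.dist (x 0) (T (j - 1) v) ∧
    (j : ℤ) - 2 ≤ (m : ℤ) ∧ m ≤ n ∧ n ≤ j + 1 ∧
    G.dist v (T (j - 1) v) = n - m ∧
    (n = m ↔ T (j - 1) v = v) ∧
    (n = m + 1 ↔ G.Adj v (T (j - 1) v)) := by
  have hjk : j - 1 < L := by omega
  have hjx : x ((j - 1) + 1) = x j := by rw [Nat.sub_add_cancel hj1]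
  have hmain : G.dist (x 0) v + G.dist v (T (j - 1) v) = G.dist (x 0) (T (j - 1) v) := by
    subst hv
    exact main_key G hconn D L hD hL hreg hBM x hadj hgeo T hT (j - 1) hjk z hz
  have hvB : G.dist (x (j - 1)) v ≤ 1 := by
    have h := (iterT_bij G D L x T hT (j - 1) (by omega)).1 hz
    rw [hv]; exact h
  have hTvB : G.dist (x j) (T (j - 1) v) ≤ 1 := by
    have h := (hT (j - 1) hjk).1.1 hvB
    rw [← hjx]; exact h
  have hdx : G.dist (x 0) (x (j - 1)) = j - 1 :=
    dist_x G hconn L x hadj hgeo (j - 1) (by omega)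
  have hdxj : G.dist (x 0) (x j) = j := dist_x G hconn L x hadj hgeo j hjL
  have hmn : m + G.dist v (T (j - 1) v) = n := by rw [← hm, ← hn]; exact hmain
  have hub : n ≤ j + 1 := by
    have h2 : G.dist (x 0) (T (j - 1) v) ≤ G.dist (x 0) (x j) + G.dist (x j) (T (j - 1) v) :=
      hconn.dist_triangle
    rw [hn, hdxj] at h2
    omega
  have hlb : (j : ℤ) - 2 ≤ (m : ℤ) := by
    have h2 : G.dist (x 0) (x (j - 1)) ≤ G.dist (x 0) v + G.dist v (x (j - 1)) :=
      hconn.dist_triangle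
    have h3 : G.dist v (x (j - 1)) ≤ 1 := by rw [SimpleGraph.dist_comm]; exact hvB
    rw [hdx, hm] at h2
    omega
  refine ⟨hmain, hlb, by omega, hub, by omega, ?_, ?_⟩
  · constructor
    · intro h
      have h0 : G.dist v (T (j - 1) v) = 0 := by omega
      exact ((hconn.dist_eq_zero_iff).mp h0).symm
    · intro h
      rw [h, SimpleGraph.dist_self] at hmn
      omega
  · constructor
    · intro h
      have h1 : G.dist v (T (j - 1) v) = 1 := by omega
      exact SimpleGraph.dist_eq_one_iff_adj.mp h1
    · intro h
      have h1 : G.dist v (T (j - 1) v) = 1 := SimpleGraph.dist_eq_one_iff_adj.mpr h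
      omega

end BMS
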